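/- Fix x ∈ {0,1}^n, let C_search = (2/3)C_x + (1/3)C_I be as follows: C_I[ρ] = 2^{-n} Σ_α diag(Q_α, −Q_α) ρ diag(Q_α, −Q_α)† and C_x[ρ] = 2^{-n} Σ_{i,j} diag(|i⟩⟨j|, |i⊕x⟩⟨j⊕x|) ρ diag(|i⟩⟨j|, |i⊕x⟩⟨j⊕x|)†. Let σ = |+⟩⟨+|^{⊗(n+1)}, the 2^{n+1} × 2^{n+1} matrix all of whose entries equal 2^{-(n+1)}. Then (1/4)σ + (3/4)C_search[σ] equals the (1+n)-qubit block matrix whose two diagonal blocks both equal (1/4)|+⟩⟨+|^{⊗n} + 2^{-(n+2)} I and whose two off-diagonal blocks both equal 2^{-(n+2)} Q_x. -/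

import Mathlib

open Matrix BigOperators

/-- Bitstrings of length `n`. -/
abbrev BV (n : ℕ) : Type := Fin n → ZMod 2

/-- The Pauli X-string `Q_α`: `(Q_α)_{ij} = 1` iff `j = i ⊕ α`. -/
def Qx {n : ℕ} (α : BV n) : Matrix (BV n) (BV n) ℂ :=
  Matrix.of fun i j => if j = i + α then 1 else 0

/-- The channel `C_I[ρ] = 2^{-n} ∑_α diag(Q_α, −Q_α) ρ diag(Q_α, −Q_α)†`. -/
noncomputable def CI {n : ℕ} (ρ : Matrix (BV n ⊕ BV n) (BV n ⊕ BV n) ℂ) :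
    Matrix (BV n ⊕ BV n) (BV n ⊕ BV n) ℂ :=
  ((2 : ℂ) ^ n)⁻¹ •
    ∑ α : BV n,
      Matrix.fromBlocks (Qx α) 0 0 (-Qx α) * ρ *
        (Matrix.fromBlocks (Qx α) 0 0 (-Qx α))ᴴ

/-- The channel `C_x[ρ] = 2^{-n} ∑_{i,j} diag(|i⟩⟨j|, |i⊕x⟩⟨j⊕x|) ρ diag(...)†`. -/
noncomputable def Cx {n : ℕ} (x : BV n)
    (ρ : Matrix (BV n ⊕ BV n) (BV n ⊕ BV n) ℂ) :
    Matrix (BV n ⊕ BV n) (BV n ⊕ BV n) ℂ :=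
  ((2 : ℂ) ^ n)⁻¹ •
    ∑ i : BV n, ∑ j : BV n,
      Matrix.fromBlocks (Matrix.single i j (1 : ℂ)) 0 0
          (Matrix.single (i + x) (j + x) (1 : ℂ)) * ρ *
        (Matrix.fromBlocks (Matrix.single i j (1 : ℂ)) 0 0
          (Matrix.single (i + x) (j + x) (1 : ℂ)))ᴴ

/-- The Pauli searching oracle `C_search = (2/3) C_x + (1/3) C_I`. -/
noncomputable def Csearch {n : ℕ} (x : BV n)
    (ρ : Matrix (BV n ⊕ BV n) (BV n ⊕ BV n) ℂ) :
    Matrix (BV n ⊕ BV n) (BV n ⊕ BV n) ℂ :=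
  (2 / 3 : ℂ) • Cx x ρ + (1 / 3 : ℂ) • CI ρ

/-- `|+⟩⟨+|^{⊗n}`: the `2^n × 2^n` matrix all of whose entries equal `2^{-n}`. -/
noncomputable def plusN (n : ℕ) : Matrix (BV n) (BV n) ℂ :=
  Matrix.of fun _ _ => ((2 : ℂ) ^ n)⁻¹

/-- `σ = |+⟩⟨+|^{⊗(n+1)}`: the `2^{n+1} × 2^{n+1}` matrix all of whose entries
equal `2^{-(n+1)}`, in `(1+n)`-qubit block form. -/
noncomputable def plusAll (n : ℕ) : Matrix (BV n ⊕ BV n) (BV n ⊕ BV n) ℂ :=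
  Matrix.of fun _ _ => ((2 : ℂ) ^ (n + 1))⁻¹


lemma BV.add_self {n : ℕ} (a : BV n) : a + a = 0 := by
  funext i
  have : ∀ z : ZMod 2, z + z = 0 := by decide
  exact this (a i)

lemma BV.eq_add_iff {n : ℕ} (a b c : BV n) : a = b + c ↔ b = a + c := by
  constructor <;> rintro rfl <;> rw [add_assoc, BV.add_self, add_zero]

lemma Qx_conjTranspose {n : ℕ} (α : BV n) : (Qx α)ᴴ = Qx α := by
  ext i j
  simp only [conjTranspose_apply, Qx, Matrix.of_apply, BV.eq_add_iff j i α]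
  split <;> simp

lemma Qx_mul_plusN {n : ℕ} (α : BV n) : Qx α * plusN n = plusN n := by
  ext i j
  simp [mul_apply, Qx, plusN]

lemma plusN_mul_Qx {n : ℕ} (α : BV n) : plusN n * Qx α = plusN n := by
  ext i j
  simp only [mul_apply, Qx, plusN, Matrix.of_apply, BV.eq_add_iff j]
  simp

lemma card_BV (n : ℕ) : Fintype.card (BV n) = 2 ^ n := by
  simp [Fintype.card_fun]

lemma sbm_mul_plusN_mul_sbm {n : ℕ} (i j k l : BV n) :
    Matrix.single i j (1 : ℂ) * plusN n * Matrix.single k l (1 : ℂ)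
      = ((2 : ℂ) ^ n)⁻¹ • Matrix.single i l (1 : ℂ) := by
  ext a b
  simp [mul_apply, plusN, Matrix.single, ite_and, Finset.sum_ite_eq,
    Finset.sum_ite_eq', mul_comm]
  split <;> split <;> simp_all

lemma plusAll_eq (n : ℕ) :
    plusAll n = (2 : ℂ)⁻¹ •
      Matrix.fromBlocks (plusN n) (plusN n) (plusN n) (plusN n) := by
  ext (a | a) (b | b) <;>
    simp [plusAll, plusN, fromBlocks, pow_succ, mul_comm]

lemma sbm_conjTranspose {n : ℕ} (i j : BV n) :
    (Matrix.single i j (1 : ℂ))ᴴ = Matrix.single j i (1 : ℂ) := by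
  ext a b
  simp [conjTranspose_apply, Matrix.single, and_comm]

lemma sum_sbm_diag (n : ℕ) :
    ∑ i : BV n, Matrix.single i i (1 : ℂ) = 1 := by
  ext a b
  simp [Matrix.sum_apply, Matrix.single, ite_and, Matrix.one_apply, eq_comm]

lemma sum_sbm_shift {n : ℕ} (x : BV n) :
    ∑ i : BV n, Matrix.single i (i + x) (1 : ℂ) = Qx x := by
  ext a b
  simp [Matrix.sum_apply, Matrix.single, ite_and, Qx, eq_comm]

lemma sum_sbm_shift' {n : ℕ} (x : BV n) :
    ∑ i : BV n, Matrix.single (i + x) i (1 : ℂ) = Qx x := by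
  ext a b
  have key : ∀ c : BV n, (c + x = a) = (c = a + x) := by
    intro c
    simp only [eq_iff_iff]
    constructor <;> rintro rfl
    · rw [add_assoc, BV.add_self, add_zero]
    · rw [add_assoc, BV.add_self, add_zero]
  rw [Qx]
  simp only [Matrix.sum_apply, Matrix.single, Matrix.of_apply, ite_and, key]
  simp [Finset.sum_ite_eq', eq_comm]

lemma sum_sbm_diag_shift {n : ℕ} (x : BV n) :
    ∑ i : BV n, Matrix.single (i + x) (i + x) (1 : ℂ) = 1 := by
  rw [← sum_sbm_diag n]
  exact Fintype.sum_equiv (Equiv.addRight x) _ _ (fun i => rfl)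

lemma fromBlocks_sum {ι : Type*} {n : ℕ} (s : Finset ι)
    (A B C D : ι → Matrix (BV n) (BV n) ℂ) :
    (∑ i ∈ s, Matrix.fromBlocks (A i) (B i) (C i) (D i))
      = Matrix.fromBlocks (∑ i ∈ s, A i) (∑ i ∈ s, B i) (∑ i ∈ s, C i)
          (∑ i ∈ s, D i) := by
  ext (a | a) (b | b) <;> simp [Matrix.sum_apply, fromBlocks]

lemma CI_term {n : ℕ} (α : BV n) :
    Matrix.fromBlocks (Qx α) 0 0 (-Qx α) * plusAll n *
        (Matrix.fromBlocks (Qx α) 0 0 (-Qx α))ᴴ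
      = (2 : ℂ)⁻¹ •
          Matrix.fromBlocks (plusN n) (-plusN n) (-plusN n) (plusN n) := by
  rw [plusAll_eq, Matrix.fromBlocks_conjTranspose, Matrix.mul_smul,
    Matrix.smul_mul, Matrix.fromBlocks_multiply, Matrix.fromBlocks_multiply]
  simp [Qx_conjTranspose, Qx_mul_plusN, plusN_mul_Qx, Matrix.neg_mul,
    Matrix.mul_neg]

lemma Cx_term {n : ℕ} (x i j : BV n) :
    Matrix.fromBlocks (Matrix.single i j (1 : ℂ)) 0 0
          (Matrix.single (i + x) (j + x) (1 : ℂ)) * plusAll n *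
        (Matrix.fromBlocks (Matrix.single i j (1 : ℂ)) 0 0
          (Matrix.single (i + x) (j + x) (1 : ℂ)))ᴴ
      = ((2 : ℂ) ^ (n + 1))⁻¹ •
          Matrix.fromBlocks (Matrix.single i i 1)
            (Matrix.single i (i + x) 1)
            (Matrix.single (i + x) i 1)
            (Matrix.single (i + x) (i + x) 1) := by
  rw [plusAll_eq, Matrix.fromBlocks_conjTranspose, Matrix.mul_smul,
    Matrix.smul_mul, Matrix.fromBlocks_multiply, Matrix.fromBlocks_multiply]
  simp only [sbm_conjTranspose, Matrix.conjTranspose_zero, Matrix.mul_zero,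
    Matrix.zero_mul, add_zero, zero_add, Matrix.mul_assoc]
  rw [← Matrix.mul_assoc (Matrix.single i j 1),
    ← Matrix.mul_assoc (Matrix.single i j 1),
    ← Matrix.mul_assoc (Matrix.single (i+x) (j+x) 1),
    ← Matrix.mul_assoc (Matrix.single (i+x) (j+x) 1)]
  rw [sbm_mul_plusN_mul_sbm, sbm_mul_plusN_mul_sbm, sbm_mul_plusN_mul_sbm,
    sbm_mul_plusN_mul_sbm]
  rw [← Matrix.fromBlocks_smul, smul_smul, pow_succ, mul_inv, mul_comm]

lemma two_pow_ne (n : ℕ) : ((2 : ℂ) ^ n) ≠ 0 := pow_ne_zero _ two_ne_zero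

lemma CI_plusAll (n : ℕ) :
    CI (plusAll n)
      = (2 : ℂ)⁻¹ • Matrix.fromBlocks (plusN n) (-plusN n) (-plusN n) (plusN n) := by
  unfold CI
  simp only [CI_term, Finset.sum_const, Finset.card_univ, card_BV,
    ← Nat.cast_smul_eq_nsmul ℂ, smul_smul]
  push_cast
  rw [inv_mul_cancel_left₀ (two_pow_ne n)]

lemma Cx_plusAll {n : ℕ} (x : BV n) :
    Cx x (plusAll n)
      = ((2 : ℂ) ^ (n + 1))⁻¹ • Matrix.fromBlocks 1 (Qx x) (Qx x) 1 := by
  unfold Cx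
  simp only [Cx_term, Finset.sum_const, Finset.card_univ, card_BV,
    ← Nat.cast_smul_eq_nsmul ℂ, smul_smul, ← Finset.smul_sum]
  push_cast
  rw [fromBlocks_sum, sum_sbm_diag, sum_sbm_shift, sum_sbm_shift',
    sum_sbm_diag_shift, ← mul_assoc, inv_mul_cancel₀ (two_pow_ne n), one_mul]

/-- The output state of the search procedure: `(1/4)σ + (3/4)C_search[σ]` equals the
block matrix with both diagonal blocks `(1/4)|+⟩⟨+|^{⊗n} + 2^{-(n+2)} I` and both
off-diagonal blocks `2^{-(n+2)} Q_x`. -/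
theorem pauli_search_output_state {n : ℕ} (x : BV n) :
    (1 / 4 : ℂ) • plusAll n + (3 / 4 : ℂ) • Csearch x (plusAll n)
      = Matrix.fromBlocks
          ((1 / 4 : ℂ) • plusN n + ((2 : ℂ) ^ (n + 2))⁻¹ • 1)
          (((2 : ℂ) ^ (n + 2))⁻¹ • Qx x)
          (((2 : ℂ) ^ (n + 2))⁻¹ • Qx x)
          ((1 / 4 : ℂ) • plusN n + ((2 : ℂ) ^ (n + 2))⁻¹ • 1) := by
  unfold Csearch
  rw [CI_plusAll, Cx_plusAll, plusAll_eq]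
  simp only [smul_add, smul_smul, smul_neg, Matrix.fromBlocks_smul,
    Matrix.fromBlocks_add]
  rw [Matrix.fromBlocks_inj]
  refine ⟨?_, ?_, ?_, ?_⟩ <;>
  · match_scalars <;> · field_simp; ring
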